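/- The deduction system consisting of the rules (Ref) and (Sim_i) — where (Ref) infers A ⇒ A and (Sim_i) infers A ∪ ((C \ B) + i) ⇒ D + i from A ⇒ B + i and C ⇒ D, for any i ∈ ℤ — proves exactly the same formulas from any theory Σ as the system consisting of (Ax), (Cut), and (Shf). -/

import Mathlib

namespace TAI

variable {Y : Type*}

/-- Time shift of a set of time-annotated attributes: `M + j`. -/
def shiftS (M : Set (Y × ℤ)) (j : ℤ) : Set (Y × ℤ) :=
  (fun p : Y × ℤ => (p.1, p.2 + j)) '' M

/-- Time shift of a finite set of time-annotated attributes: `A + j`. -/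
def shiftF [DecidableEq Y] (A : Finset (Y × ℤ)) (j : ℤ) : Finset (Y × ℤ) :=
  A.image (fun p => (p.1, p.2 + j))

/-- An attribute implication over `Y` annotated by time points: a pair
`(A, B)` of finite subsets of `T_Y = Y × ℤ`, read as `A ⇒ B`. -/
abbrev Fml (Y : Type*) := Finset (Y × ℤ) × Finset (Y × ℤ)

/-- `A ⇒ B` is true in `M ⊆ T_Y`: for every `i ∈ ℤ`, `A + i ⊆ M` implies `B + i ⊆ M`. -/
def Holds [DecidableEq Y] (M : Set (Y × ℤ)) (φ : Fml Y) : Prop :=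
  ∀ i : ℤ, ↑(shiftF φ.1 i) ⊆ M → ↑(shiftF φ.2 i) ⊆ M

/-- The models of a theory `T`. -/
def Mods [DecidableEq Y] (T : Set (Fml Y)) : Set (Set (Y × ℤ)) :=
  {M | ∀ φ ∈ T, Holds M φ}

/-- Semantic entailment: `T ⊨ φ`. -/
def Entails [DecidableEq Y] (T : Set (Fml Y)) (φ : Fml Y) : Prop :=
  ∀ M ∈ Mods T, Holds M φ

/-- Semantic closure `[M]_Σ`. -/
def semClos [DecidableEq Y] (T : Set (Fml Y)) (M : Set (Y × ℤ)) : Set (Y × ℤ) :=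
  ⋂₀ {N | N ∈ Mods T ∧ M ⊆ N}

/-- Classical (time-point-free) truth: `M ⊨_PL A ⇒ B` iff `A ⊆ M` implies `B ⊆ M`. -/
def HoldsPL (M : Set (Y × ℤ)) (φ : Fml Y) : Prop :=
  ↑φ.1 ⊆ M → ↑φ.2 ⊆ M

/-- Classical models. -/
def ModsPL (T : Set (Fml Y)) : Set (Set (Y × ℤ)) :=
  {M | ∀ φ ∈ T, HoldsPL M φ}

/-- Classical semantic entailment `⊨_PL`. -/
def EntailsPL (T : Set (Fml Y)) (φ : Fml Y) : Prop :=
  ∀ M ∈ ModsPL T, HoldsPL M φ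

/-- `Σ^PL = {A + i ⇒ B + i | A ⇒ B ∈ Σ, i ∈ ℤ}`. -/
def shiftAll [DecidableEq Y] (T : Set (Fml Y)) : Set (Fml Y) :=
  {ψ | ∃ φ ∈ T, ∃ i : ℤ, ψ = (shiftF φ.1 i, shiftF φ.2 i)}

/-- One step of the syntactic closure construction. -/
def synStep [DecidableEq Y] (T : Set (Fml Y)) (M : Set (Y × ℤ)) : Set (Y × ℤ) :=
  M ∪ ⋃₀ {S | ∃ φ ∈ T, ∃ i : ℤ, ↑(shiftF φ.1 i) ⊆ M ∧ S = (↑(shiftF φ.2 i) : Set (Y × ℤ))}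

/-- `M_Σ^n`. -/
def synIter [DecidableEq Y] (T : Set (Fml Y)) (M : Set (Y × ℤ)) : ℕ → Set (Y × ℤ)
  | 0 => M
  | n + 1 => synStep T (synIter T M n)

/-- The syntactic closure `M_Σ^ω`. -/
def synClos [DecidableEq Y] (T : Set (Fml Y)) (M : Set (Y × ℤ)) : Set (Y × ℤ) :=
  ⋃ n : ℕ, synIter T M n

/-- Provability from `T` using the rules (Ax), (Cut) and (Shf). -/
inductive Prov [DecidableEq Y] (T : Set (Fml Y)) : Fml Y → Prop
  | hyp {φ : Fml Y} : φ ∈ T → Prov T φ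
  | ax (A B : Finset (Y × ℤ)) : Prov T (A ∪ B, A)
  | cut {A B C D : Finset (Y × ℤ)} :
      Prov T (A, B) → Prov T (B ∪ C, D) → Prov T (A ∪ C, D)
  | shf {A B : Finset (Y × ℤ)} (i : ℤ) :
      Prov T (A, B) → Prov T (shiftF A i, shiftF B i)

/-- Provability from `T` using only the rules (Ax) and (Cut) (no time shifts). -/
inductive ProvAC [DecidableEq Y] (T : Set (Fml Y)) : Fml Y → Prop
  | hyp {φ : Fml Y} : φ ∈ T → ProvAC T φ
  | ax (A B : Finset (Y × ℤ)) : ProvAC T (A ∪ B, A)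
  | cut {A B C D : Finset (Y × ℤ)} :
      ProvAC T (A, B) → ProvAC T (B ∪ C, D) → ProvAC T (A ∪ C, D)

/-- Provability from `T` using the rules (Ax) and (Cut_i). -/
inductive ProvCuti [DecidableEq Y] (T : Set (Fml Y)) : Fml Y → Prop
  | hyp {φ : Fml Y} : φ ∈ T → ProvCuti T φ
  | ax (A B : Finset (Y × ℤ)) : ProvCuti T (A ∪ B, A)
  | cuti {A B C D : Finset (Y × ℤ)} (i : ℤ) :
      ProvCuti T (A, shiftF B i) → ProvCuti T (B ∪ C, D) →
      ProvCuti T (A ∪ shiftF C i, shiftF D i)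

/-- Provability from `T` using the rules (Ref) and (Sim_i). -/
inductive ProvRS [DecidableEq Y] (T : Set (Fml Y)) : Fml Y → Prop
  | hyp {φ : Fml Y} : φ ∈ T → ProvRS T φ
  | ref (A : Finset (Y × ℤ)) : ProvRS T (A, A)
  | simi {A B C D : Finset (Y × ℤ)} (i : ℤ) :
      ProvRS T (A, shiftF B i) → ProvRS T (C, D) →
      ProvRS T (A ∪ shiftF (C \ B) i, shiftF D i)

/-- The closure operator induced by a closure system `S`. -/
def closOp (S : Set (Set (Y × ℤ))) (M : Set (Y × ℤ)) : Set (Y × ℤ) :=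
  ⋂₀ {N | N ∈ S ∧ M ⊆ N}

/-- The least time point occurring in a finite set (`0` for the empty set). -/
def lo (A : Finset (Y × ℤ)) : ℤ :=
  WithTop.untopD 0 (A.image Prod.snd).min

/-- The greatest time point occurring in a finite set (`0` for the empty set). -/
def hi (A : Finset (Y × ℤ)) : ℤ :=
  WithBot.unbotD 0 (A.image Prod.snd).max

/-- A formula `A ⇒ B` is predictive if `A ≠ ∅`, `B ≠ ∅`, and every time point in
`A` is less than or equal to every time point in `B`. -/
def Predictive (φ : Fml Y) : Prop :=
  φ.1.Nonempty ∧ φ.2.Nonempty ∧ ∀ p ∈ φ.1, ∀ q ∈ φ.2, p.2 ≤ q.2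

lemma shiftF_zero [DecidableEq Y] (A : Finset (Y × ℤ)) : shiftF A 0 = A := by
  ext p; simp [shiftF]

lemma shiftF_union [DecidableEq Y] (A B : Finset (Y × ℤ)) (i : ℤ) :
    shiftF (A ∪ B) i = shiftF A i ∪ shiftF B i := Finset.image_union _ _

lemma shiftF_empty [DecidableEq Y] (i : ℤ) : shiftF (∅ : Finset (Y × ℤ)) i = ∅ := rfl

lemma prov_sub [DecidableEq Y] {T : Set (Fml Y)} {X S : Finset (Y × ℤ)} (h : S ⊆ X) :
    Prov T (X, S) := by
  have := Prov.ax (T := T) S X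
  rwa [Finset.union_eq_right.mpr h] at this

lemma prov_trans [DecidableEq Y] {T : Set (Fml Y)} {A B C : Finset (Y × ℤ)}
    (h1 : Prov T (A, B)) (h2 : Prov T (B, C)) : Prov T (A, C) := by
  have h2' : Prov T (B ∪ ∅, C) := by rwa [Finset.union_empty]
  have := Prov.cut h1 h2'
  rwa [Finset.union_empty] at this

lemma prov_simi [DecidableEq Y] {T : Set (Fml Y)} {A B C D : Finset (Y × ℤ)} (i : ℤ)
    (h1 : Prov T (A, shiftF B i)) (h2 : Prov T (C, D)) :
    Prov T (A ∪ shiftF (C \ B) i, shiftF D i) := by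
  have hc : Prov T (B ∪ (C \ B), C) := prov_sub (by
    intro x hx
    simp only [Finset.mem_union, Finset.mem_sdiff]
    by_cases hb : x ∈ B
    · exact Or.inl hb
    · exact Or.inr ⟨hx, hb⟩)
  have hx : Prov T (B ∪ (C \ B), D) := prov_trans hc h2
  have hs := Prov.shf i hx
  rw [shiftF_union] at hs
  exact Prov.cut h1 hs

lemma rs_sub [DecidableEq Y] {T : Set (Fml Y)} {X S : Finset (Y × ℤ)} (h : S ⊆ X) :
    ProvRS T (X, S) := by
  have h1 : ProvRS T (X, shiftF X 0) := by rw [shiftF_zero]; exact ProvRS.ref X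
  have := ProvRS.simi 0 h1 (ProvRS.ref S)
  rwa [Finset.sdiff_eq_empty_iff_subset.mpr h, shiftF_empty, Finset.union_empty,
    shiftF_zero] at this

lemma rs_trans [DecidableEq Y] {T : Set (Fml Y)} {A B C : Finset (Y × ℤ)}
    (h1 : ProvRS T (A, B)) (h2 : ProvRS T (B, C)) : ProvRS T (A, C) := by
  have h1' : ProvRS T (A, shiftF B 0) := by rwa [shiftF_zero]
  have := ProvRS.simi 0 h1' h2
  rwa [Finset.sdiff_self, shiftF_empty, Finset.union_empty, shiftF_zero] at this

lemma rs_shf [DecidableEq Y] {T : Set (Fml Y)} {A B : Finset (Y × ℤ)} (i : ℤ)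
    (h : ProvRS T (A, B)) : ProvRS T (shiftF A i, shiftF B i) := by
  have := ProvRS.simi i (ProvRS.ref (shiftF A i)) h
  rwa [Finset.sdiff_self, shiftF_empty, Finset.union_empty] at this

lemma rs_cut [DecidableEq Y] {T : Set (Fml Y)} {A B C D : Finset (Y × ℤ)}
    (h1 : ProvRS T (A, B)) (h2 : ProvRS T (B ∪ C, D)) : ProvRS T (A ∪ C, D) := by
  have h1' : ProvRS T (A, shiftF B 0) := by rwa [shiftF_zero]
  have h3 := ProvRS.simi 0 h1' h2
  rw [shiftF_zero, shiftF_zero] at h3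
  have h4 : ProvRS T (A ∪ C, A ∪ ((B ∪ C) \ B)) := rs_sub (by
    intro x hx
    simp only [Finset.mem_union, Finset.mem_sdiff] at hx ⊢
    tauto)
  exact rs_trans h4 h3

/-- the system with rules (Ref) and (Sim_i) proves exactly the
same formulas from any theory as the system with (Ax), (Cut) and (Shf). -/
theorem prov_iff_provRS [DecidableEq Y] [Fintype Y] [Nonempty Y] :
    ∀ (T : Set (Fml Y)) (φ : Fml Y), Prov T φ ↔ ProvRS T φ := by
  intro T φ
  constructor
  · intro h
    induction h with
    | hyp h => exact ProvRS.hyp h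
    | ax A B => exact rs_sub Finset.subset_union_left
    | cut h1 h2 ih1 ih2 => exact rs_cut ih1 ih2
    | shf i h ih => exact rs_shf i ih
  · intro h
    induction h with
    | hyp h => exact Prov.hyp h
    | ref A => exact prov_sub (subset_refl A)
    | simi i h1 h2 ih1 ih2 => exact prov_simi i ih1 ih2

end TAI
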